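/- The radial function w(r) = η₀(r) + 2r²/(1+r²) - (1/2)η₀(r)² + ((1-r²)/(1+r²))∫₁^{1+r²} (log t)/(1-t) dt, where η₀(r) = -log(1+r²), satisfies the ODE -w''(r) - w'(r)/r = 4e^{2η₀(r)}(η₀(r) + η₀(r)² + 2w(r)) for r > 0, with w(0) = 0 and w'(0) = 0. -/

import Mathlib

open Real MeasureTheory intervalIntegral

noncomputable def GI : ℝ → ℝ := fun r => ∫ t in (1:ℝ)..(1 + r ^ 2), Real.log t / (1 - t)

lemma fI_bound {b : ℝ} (hb : 1 ≤ b) : ∀ t ∈ Set.uIoc (1:ℝ) b, ‖Real.log t / (1 - t)‖ ≤ 1 := by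
  intro t ht
  rw [Set.uIoc_of_le hb] at ht
  obtain ⟨h1, h2⟩ := ht
  rw [Real.norm_eq_abs, abs_div, abs_of_nonneg (Real.log_nonneg h1.le),
    abs_of_neg (by linarith : 1 - t < 0)]
  rw [div_le_one (by linarith)]
  have := Real.log_le_sub_one_of_pos (by linarith : 0 < t)
  linarith

lemma fI_intble {b : ℝ} (hb : 1 ≤ b) :
    IntervalIntegrable (fun t => Real.log t / (1 - t)) volume 1 b := by
  rw [intervalIntegrable_iff]
  apply Measure.integrableOn_of_bounded (M := 1)
  · rw [Set.uIoc_of_le hb]; exact measure_Ioc_lt_top.ne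
  · exact (Real.measurable_log.div (measurable_const.sub measurable_id)).aestronglyMeasurable
  · rw [Set.uIoc_of_le hb, ae_restrict_iff' measurableSet_Ioc]
    exact .of_forall fun t ht => fI_bound hb t (by rw [Set.uIoc_of_le hb]; exact ht)

lemma hs_lemma (r : ℝ) : HasDerivAt (fun x : ℝ => 1 + x ^ 2) (2 * r) r := by
  simpa using (hasDerivAt_pow 2 r).const_add 1

lemma hspos (r : ℝ) : (0:ℝ) < 1 + r ^ 2 := by positivity

lemma hlog_lemma (r : ℝ) : HasDerivAt (fun x : ℝ => Real.log (1 + x ^ 2))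
    (2 * r / (1 + r ^ 2)) r := by
  have h := (Real.hasDerivAt_log (hspos r).ne').comp r (hs_lemma r)
  have h2 : HasDerivAt (fun x : ℝ => Real.log (1 + x ^ 2)) ((1 + r ^ 2)⁻¹ * (2 * r)) r := h
  convert h2 using 1
  field_simp

lemma GI_bound (x : ℝ) : ‖GI x‖ ≤ x ^ 2 := by
  have h := intervalIntegral.norm_integral_le_of_norm_le_const
    (fI_bound (by nlinarith : (1:ℝ) ≤ 1 + x ^ 2))
  calc ‖GI x‖ ≤ 1 * |1 + x ^ 2 - 1| := h
    _ = x ^ 2 := by rw [show (1:ℝ) + x ^ 2 - 1 = x ^ 2 by ring, abs_of_nonneg (sq_nonneg x), one_mul]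

lemma GI_zero : GI 0 = 0 := by
  simp [GI]

lemma GI_deriv {r : ℝ} (hr : 0 < r) :
    HasDerivAt GI (-(2 * Real.log (1 + r ^ 2)) / r) r := by
  have h1 : (1:ℝ) < 1 + r ^ 2 := by nlinarith
  have hF : HasDerivAt (fun x => ∫ t in (1:ℝ)..x, Real.log t / (1 - t))
      (Real.log (1 + r ^ 2) / (1 - (1 + r ^ 2))) (1 + r ^ 2) :=
    intervalIntegral.integral_hasDerivAt_right (fI_intble h1.le)
      ((Real.measurable_log.div
        (measurable_const.sub measurable_id)).aestronglyMeasurable.stronglyMeasurableAtFilter)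
      (ContinuousAt.div (Real.continuousAt_log (by positivity)) (by fun_prop) (by nlinarith))
  have h := hF.comp r (hs_lemma r)
  have h2 : HasDerivAt GI (Real.log (1 + r ^ 2) / (1 - (1 + r ^ 2)) * (2 * r)) r := h
  convert h2 using 1
  have hr0 : r ≠ 0 := hr.ne'
  field_simp
  ring

lemma GI_deriv_zero : HasDerivAt GI 0 0 := by
  rw [hasDerivAt_iff_tendsto_slope]
  apply squeeze_zero_norm (a := fun x => |x|)
  · intro x
    rcases eq_or_ne x 0 with h | h
    · simp [h, slope]
    · have : slope GI 0 x = GI x / x := by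
        simp [slope_def_field, GI_zero]
      rw [this, norm_div, Real.norm_eq_abs x, div_le_iff₀ (abs_pos.2 h)]
      calc ‖GI x‖ ≤ x ^ 2 := GI_bound x
        _ = |x| * |x| := by rw [sq, ← abs_mul_abs_self x]
  · have : Filter.Tendsto (fun x : ℝ => |x|) (nhds 0) (nhds 0) := by
      simpa using continuous_abs.tendsto (0:ℝ)
    exact this.mono_left nhdsWithin_le_nhds

noncomputable def W1c : ℝ → ℝ := fun r =>
  -(2 * r / (1 + r ^ 2)) + 4 * r / (1 + r ^ 2) ^ 2
    - 2 * Real.log (1 + r ^ 2) / (r * (1 + r ^ 2)) - 4 * r * GI r / (1 + r ^ 2) ^ 2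

noncomputable def W2c : ℝ → ℝ := fun r =>
  -(2 / (1 + r ^ 2)) + 4 * r ^ 2 / (1 + r ^ 2) ^ 2 - 16 * r ^ 2 / (1 + r ^ 2) ^ 3
    + 2 * Real.log (1 + r ^ 2) * ((1 + r ^ 2) + 2 * r ^ 2) / (r ^ 2 * (1 + r ^ 2) ^ 2)
    + 8 * Real.log (1 + r ^ 2) / (1 + r ^ 2) ^ 2
    - 4 * GI r / (1 + r ^ 2) ^ 2 + 16 * r ^ 2 * GI r / (1 + r ^ 2) ^ 3

lemma W1c_deriv {r : ℝ} (hr : 0 < r) : HasDerivAt W1c (W2c r) r := by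
  have hs := hs_lemma r
  have hne : (1 + r ^ 2 : ℝ) ≠ 0 := (hspos r).ne'
  have hne2 : ((1 + r ^ 2 : ℝ) ^ 2) ≠ 0 := pow_ne_zero 2 hne
  have hr0 : r ≠ 0 := hr.ne'
  have q1 := (((hasDerivAt_id' (x := r)).const_mul 2).div hs hne).neg
  have q2 := ((hasDerivAt_id' (x := r)).const_mul 4).div (hs.pow 2) hne2
  have q3 := ((hlog_lemma r).const_mul 2).div ((hasDerivAt_id' (x := r)).mul hs)
    (mul_ne_zero hr0 hne)
  have q4 := ((((hasDerivAt_id' (x := r)).const_mul 4).mul (GI_deriv hr)).div (hs.pow 2) hne2)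
  have hD := ((q1.add q2).sub q3).sub q4
  have hD2 : HasDerivAt W1c _ r := hD
  convert hD2 using 1
  simp only [W2c]
  push_cast
  simp only [Pi.pow_apply, Pi.mul_apply]
  field_simp
  ring

/-- The explicit radial function `w` solves
`-w'' - w'/r = 4 e^{2η₀}(η₀ + η₀² + 2w)` for `r > 0`, with `w(0)=0`, `w'(0)=0`,
where `η₀(r) = -log(1+r²)`. -/
theorem stmt3 (η₀ w : ℝ → ℝ)
    (hη₀ : ∀ r, η₀ r = -Real.log (1 + r ^ 2))
    (hw : ∀ r, w r = η₀ r + 2 * r ^ 2 / (1 + r ^ 2) - (1 / 2) * (η₀ r) ^ 2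
        + (1 - r ^ 2) / (1 + r ^ 2) * ∫ t in (1 : ℝ)..(1 + r ^ 2), Real.log t / (1 - t)) :
    (∀ r > 0, -(deriv (deriv w) r) - deriv w r / r
        = 4 * Real.exp (2 * η₀ r) * (η₀ r + (η₀ r) ^ 2 + 2 * w r)) ∧
    w 0 = 0 ∧ deriv w 0 = 0 := by
  have hwfun : w = fun r => -Real.log (1 + r ^ 2) + 2 * r ^ 2 / (1 + r ^ 2)
      - 1 / 2 * Real.log (1 + r ^ 2) ^ 2 + (1 - r ^ 2) / (1 + r ^ 2) * GI r := by
    funext x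
    rw [hw x, hη₀ x]
    simp only [GI]
    ring
  -- derivative of w at any r where GI has a derivative
  have key : ∀ (r : ℝ) (g' : ℝ) (hg : HasDerivAt GI g' r),
      HasDerivAt w (-(2 * r / (1 + r ^ 2))
        + (2 * (2 * r ^ 1) * (1 + r ^ 2) - 2 * r ^ 2 * (2 * r)) / (1 + r ^ 2) ^ 2
        - 1 / 2 * (↑2 * Real.log (1 + r ^ 2) ^ 1 * (2 * r / (1 + r ^ 2)))
        + ((-(2 * r ^ 1) * (1 + r ^ 2) - (1 - r ^ 2) * (2 * r)) / (1 + r ^ 2) ^ 2 * GI r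
          + (1 - r ^ 2) / (1 + r ^ 2) * g')) r := by
    intro r g' hg
    have hs := hs_lemma r
    have hne : (1 + r ^ 2 : ℝ) ≠ 0 := (hspos r).ne'
    have h1 := (hlog_lemma r).neg
    have h2 := ((hasDerivAt_pow 2 r).const_mul 2).div hs hne
    have h3 := ((hlog_lemma r).pow 2).const_mul (1 / 2 : ℝ)
    have h4 := ((hasDerivAt_pow 2 r).const_sub 1).div hs hne
    have hD := ((h1.add h2).sub h3).add (h4.mul hg)
    rw [hwfun]
    convert hD using 1
    · rfl
    · rfl
    · funext x; simp only [Pi.add_apply, Pi.sub_apply, Pi.neg_apply, Pi.div_apply, Pi.mul_apply, Pi.pow_apply]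
    · push_cast; simp only [Pi.div_apply]
  have hw' : ∀ r : ℝ, 0 < r → HasDerivAt w (W1c r) r := by
    intro r hr
    have hr0 : r ≠ 0 := hr.ne'
    have hne : (1 + r ^ 2 : ℝ) ≠ 0 := (hspos r).ne'
    have hD := key r _ (GI_deriv hr)
    convert hD using 1
    simp only [W1c]
    push_cast
    field_simp
    ring
  refine ⟨?_, ?_, ?_⟩
  · intro r hr
    have hr0 : r ≠ 0 := hr.ne'
    have hne : (1 + r ^ 2 : ℝ) ≠ 0 := (hspos r).ne'
    have hev : deriv w =ᶠ[nhds r] W1c :=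
      Filter.eventuallyEq_of_mem (Ioi_mem_nhds hr) fun x hx => (hw' x hx).deriv
    have hd2 : deriv (deriv w) r = W2c r := by
      rw [hev.deriv_eq]
      exact (W1c_deriv hr).deriv
    have hd1 : deriv w r = W1c r := (hw' r hr).deriv
    have hexp : Real.exp (2 * -Real.log (1 + r ^ 2)) = ((1 + r ^ 2) ^ 2)⁻¹ := by
      rw [show 2 * -Real.log (1 + r ^ 2) = Real.log (((1 + r ^ 2) ^ 2)⁻¹) by
          rw [Real.log_inv, Real.log_pow]; push_cast; ring,
        Real.exp_log (by positivity)]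
    rw [hd2, hd1, hw r, hη₀ r, hexp,
      show (∫ t in (1:ℝ)..(1 + r ^ 2), Real.log t / (1 - t)) = GI r from rfl]
    simp only [W1c, W2c]
    field_simp
    ring
  · rw [hw 0, hη₀ 0]
    norm_num
  · have hD := key 0 0 GI_deriv_zero
    have h0 : HasDerivAt w 0 0 := by
      convert hD using 1
      norm_num [GI_zero]
    exact h0.deriv
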